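/- arXiv:2507.20825 — 2 statements merged into one kernel-verified Lean document; each statement's English description precedes it below -/
import Mathlib

section
/- Let N : ℕ with 0 < N, let c₁, c₂ : ℝ, and let π, π' be permutations of {0,…,N−1}. Let A_π = Λ_{c₂,π}·F_N·Λ_{c₁} and A_{π'} = Λ_{c₂,π'}·F_N·Λ_{c₁} be one-sided CP-DAFT matrices (identity permutation on the first chirp). Then the mismatched demodulation product satisfies A_{π'}ᴴ·A_π = I_N if and only if exp(-2πi·c₂·π'(n)²) = exp(-2πi·c₂·π(n)²) for every n ∈ {0,…,N−1}, i.e. if and only if Λ_{c₂,π'} = Λ_{c₂,π}. -/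
open Matrix Complex

/-- The permuted diagonal chirp matrix `Λ_{c,π}` with diagonal entries
`exp(-2πi·c·π(n)²)`. -/
noncomputable def permChirpMatrix (N : ℕ) (c : ℝ) (π : Equiv.Perm (Fin N)) :
    Matrix (Fin N) (Fin N) ℂ :=
  Matrix.diagonal fun n => Complex.exp (-2 * Real.pi * Complex.I * c * ((π n : ℕ)) ^ 2)

/-- The `N`-point DFT matrix `F_N` with entries `(1/√N)·exp(-2πi·m·n/N)`. -/
noncomputable def dftMatrix (N : ℕ) : Matrix (Fin N) (Fin N) ℂ :=
  fun m n => (1 / Real.sqrt N : ℂ) *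
    Complex.exp (-2 * Real.pi * Complex.I * (m : ℕ) * (n : ℕ) / N)

/-- The one-sided CP-DAFT matrix `A_π = Λ_{c₂,π} · F_N · Λ_{c₁}`
(identity permutation on the first chirp). -/
noncomputable def osCPDAFT (N : ℕ) (c₁ c₂ : ℝ) (π : Equiv.Perm (Fin N)) :
    Matrix (Fin N) (Fin N) ℂ :=
  permChirpMatrix N c₂ π * dftMatrix N * permChirpMatrix N c₁ (Equiv.refl (Fin N))

lemma chirp_unitary (N : ℕ) (c : ℝ) (π : Equiv.Perm (Fin N)) :
    (permChirpMatrix N c π)ᴴ * permChirpMatrix N c π = 1 := by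
  rw [permChirpMatrix, Matrix.diagonal_conjTranspose, Matrix.diagonal_mul_diagonal,
    ← Matrix.diagonal_one]
  refine congrArg Matrix.diagonal (funext fun n => ?_)
  rw [Pi.star_apply, star_def, ← Complex.exp_conj,
    ← Complex.exp_add]
  rw [show (starRingEnd ℂ) (-2 * Real.pi * Complex.I * c * ((π n : ℕ)) ^ 2)
      = -(-2 * Real.pi * Complex.I * c * ((π n : ℕ)) ^ 2) by
    simp only [_root_.map_mul, map_neg, map_ofNat, Complex.conj_I, Complex.conj_ofReal, map_pow,
      Complex.conj_natCast]; ring]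
  simp

lemma dft_unitary (N : ℕ) (hN : 0 < N) : (dftMatrix N)ᴴ * dftMatrix N = 1 := by
  have hNC : (N : ℂ) ≠ 0 := Nat.cast_ne_zero.mpr hN.ne'
  have h2pi : (2 : ℂ) * Real.pi * Complex.I ≠ 0 := by
    simp [Real.pi_ne_zero, Complex.I_ne_zero, Complex.ofReal_ne_zero]
  ext m m'
  rw [Matrix.mul_apply, Matrix.one_apply]
  set j : ℤ := (m : ℤ) - (m' : ℤ) with hj
  set w : ℂ := Complex.exp (2 * Real.pi * Complex.I * (j : ℂ) / N) with hw
  have hterm : ∀ k : Fin N, (dftMatrix N)ᴴ m k * dftMatrix N k m'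
      = (1 / (N : ℂ)) * w ^ (k : ℕ) := by
    intro k
    rw [Matrix.conjTranspose_apply]
    simp only [dftMatrix]
    rw [hw, ← Complex.exp_nat_mul, star_def, RingHom.map_mul, ← Complex.exp_conj]
    rw [show (starRingEnd ℂ) (-2 * Real.pi * Complex.I * (k : ℕ) * (m : ℕ) / N)
        = 2 * Real.pi * Complex.I * (k : ℕ) * (m : ℕ) / N by
      simp only [map_div₀, _root_.map_mul, map_neg, map_ofNat, Complex.conj_I, Complex.conj_ofReal,
        Complex.conj_natCast]; ring]
    rw [show (starRingEnd ℂ) ((1 : ℂ) / Real.sqrt N) = (1 : ℂ) / Real.sqrt N by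
      simp [map_div₀, Complex.conj_ofReal]]
    have hs : ((Real.sqrt N : ℂ)) * (Real.sqrt N : ℂ) = (N : ℂ) := by
      rw [← Complex.ofReal_mul, Real.mul_self_sqrt (Nat.cast_nonneg N)]
      simp
    rw [mul_mul_mul_comm, div_mul_div_comm, one_mul, hs, ← Complex.exp_add]
    congr 1
    push_cast [hj]
    field_simp
    ring
  rw [Finset.sum_congr rfl fun k _ => hterm k]
  by_cases h : m = m'
  · subst h
    simp only [if_pos rfl]
    have hj0 : j = 0 := by simp [hj]
    have hw1 : w = 1 := by simp [hw, hj0]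
    simp [hw1, Finset.card_univ, hNC]
  · simp only [if_neg h]
    have hjne : j ≠ 0 := sub_ne_zero.mpr (fun hc => h (Fin.ext (by omega)))
    have hw1 : w ≠ 1 := by
      intro hc
      rw [hw, Complex.exp_eq_one_iff] at hc
      obtain ⟨t, ht⟩ := hc
      rw [div_eq_iff hNC] at ht
      have ht' : (j : ℂ) * (2 * Real.pi * Complex.I)
          = (t * N : ℤ) * (2 * Real.pi * Complex.I) := by push_cast; linear_combination ht
      have hjc : (j : ℂ) = ((t * N : ℤ) : ℂ) := mul_right_cancel₀ h2pi ht'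
      have hjz : j = t * N := by exact_mod_cast hjc
      have hm : ((m : ℕ) : ℤ) < N := by exact_mod_cast m.isLt
      have hm' : ((m' : ℕ) : ℤ) < N := by exact_mod_cast m'.isLt
      have habs : |j| < N := by
        rw [hj, abs_sub_lt_iff]
        constructor <;> omega
      exact hjne (Int.eq_zero_of_abs_lt_dvd ⟨t, by rw [hjz, mul_comm]⟩ habs)
    have hwN : w ^ N = 1 := by
      rw [hw, ← Complex.exp_nat_mul]
      rw [show (N : ℂ) * (2 * Real.pi * Complex.I * (j : ℂ) / N)
          = (j : ℂ) * (2 * Real.pi * Complex.I) by field_simp]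
      exact Complex.exp_int_mul_two_pi_mul_I j
    rw [← Finset.mul_sum, Fin.sum_univ_eq_sum_range (fun i => w ^ i) N,
      geom_sum_eq hw1, hwN, sub_self, zero_div, mul_zero]

lemma osCPDAFT_unitary (N : ℕ) (hN : 0 < N) (c₁ c₂ : ℝ) (π : Equiv.Perm (Fin N)) :
    (osCPDAFT N c₁ c₂ π)ᴴ * osCPDAFT N c₁ c₂ π = 1 := by
  have h1 := chirp_unitary N c₁ (Equiv.refl (Fin N))
  have h2 := chirp_unitary N c₂ π
  have hF := dft_unitary N hN
  calc (osCPDAFT N c₁ c₂ π)ᴴ * osCPDAFT N c₁ c₂ π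
      = (permChirpMatrix N c₁ (Equiv.refl (Fin N)))ᴴ *
        ((dftMatrix N)ᴴ * (((permChirpMatrix N c₂ π)ᴴ * permChirpMatrix N c₂ π) *
          (dftMatrix N * permChirpMatrix N c₁ (Equiv.refl (Fin N))))) := by
        simp [osCPDAFT, Matrix.conjTranspose_mul, Matrix.mul_assoc]
    _ = 1 := by
        rw [h2, Matrix.one_mul, ← Matrix.mul_assoc ((dftMatrix N)ᴴ) (dftMatrix N) _, hF,
          Matrix.one_mul, h1]

lemma osCPDAFT_cancel (N : ℕ) (hN : 0 < N) (c₁ c₂ : ℝ) (π : Equiv.Perm (Fin N)) :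
    osCPDAFT N c₁ c₂ π * ((permChirpMatrix N c₁ (Equiv.refl (Fin N)))ᴴ * (dftMatrix N)ᴴ)
      = permChirpMatrix N c₂ π := by
  have h1 : permChirpMatrix N c₁ (Equiv.refl (Fin N)) *
      (permChirpMatrix N c₁ (Equiv.refl (Fin N)))ᴴ = 1 :=
    mul_eq_one_comm.mp (chirp_unitary N c₁ (Equiv.refl (Fin N)))
  have hF : dftMatrix N * (dftMatrix N)ᴴ = 1 :=
    mul_eq_one_comm.mp (dft_unitary N hN)
  calc osCPDAFT N c₁ c₂ π * ((permChirpMatrix N c₁ (Equiv.refl (Fin N)))ᴴ * (dftMatrix N)ᴴ)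
      = permChirpMatrix N c₂ π * (dftMatrix N *
          ((permChirpMatrix N c₁ (Equiv.refl (Fin N)) *
            (permChirpMatrix N c₁ (Equiv.refl (Fin N)))ᴴ) * (dftMatrix N)ᴴ)) := by
        simp [osCPDAFT, Matrix.mul_assoc]
    _ = permChirpMatrix N c₂ π := by
        rw [h1, Matrix.one_mul, hF, Matrix.mul_one]

/-- **Mismatched demodulation**: `A_{π'}ᴴ·A_π = I_N` iff the permuted chirp phase
sequences coincide, i.e. iff `Λ_{c₂,π'} = Λ_{c₂,π}`. -/
theorem osCPDAFT_mismatch (N : ℕ) (hN : 0 < N) (c₁ c₂ : ℝ)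
    (π π' : Equiv.Perm (Fin N)) :
    ((osCPDAFT N c₁ c₂ π')ᴴ * osCPDAFT N c₁ c₂ π = 1 ↔
      ∀ n : Fin N,
        Complex.exp (-2 * Real.pi * Complex.I * c₂ * ((π' n : ℕ) : ℂ) ^ 2) =
          Complex.exp (-2 * Real.pi * Complex.I * c₂ * ((π n : ℕ) : ℂ) ^ 2)) ∧
    ((osCPDAFT N c₁ c₂ π')ᴴ * osCPDAFT N c₁ c₂ π = 1 ↔
      permChirpMatrix N c₂ π' = permChirpMatrix N c₂ π) := by
  have key : (osCPDAFT N c₁ c₂ π')ᴴ * osCPDAFT N c₁ c₂ π = 1 ↔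
      permChirpMatrix N c₂ π' = permChirpMatrix N c₂ π := by
    constructor
    · intro h
      have hA' : osCPDAFT N c₁ c₂ π' * (osCPDAFT N c₁ c₂ π')ᴴ = 1 :=
        mul_eq_one_comm.mp (osCPDAFT_unitary N hN c₁ c₂ π')
      have hAA : osCPDAFT N c₁ c₂ π = osCPDAFT N c₁ c₂ π' := by
        calc osCPDAFT N c₁ c₂ π
            = (osCPDAFT N c₁ c₂ π' * (osCPDAFT N c₁ c₂ π')ᴴ) * osCPDAFT N c₁ c₂ π := by
              rw [hA', Matrix.one_mul]
          _ = osCPDAFT N c₁ c₂ π' * ((osCPDAFT N c₁ c₂ π')ᴴ * osCPDAFT N c₁ c₂ π) :=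
              Matrix.mul_assoc _ _ _
          _ = osCPDAFT N c₁ c₂ π' := by rw [h, Matrix.mul_one]
      have := congrArg (· * ((permChirpMatrix N c₁ (Equiv.refl (Fin N)))ᴴ * (dftMatrix N)ᴴ))
        hAA
      simpa [osCPDAFT_cancel N hN c₁ c₂] using this.symm
    · intro h
      have : osCPDAFT N c₁ c₂ π' = osCPDAFT N c₁ c₂ π := by
        simp [osCPDAFT, h]
      rw [this]
      exact osCPDAFT_unitary N hN c₁ c₂ π
  have keyfun : permChirpMatrix N c₂ π' = permChirpMatrix N c₂ π ↔
      ∀ n : Fin N,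
        Complex.exp (-2 * Real.pi * Complex.I * c₂ * ((π' n : ℕ) : ℂ) ^ 2) =
          Complex.exp (-2 * Real.pi * Complex.I * c₂ * ((π n : ℕ) : ℂ) ^ 2) := by
    constructor
    · intro h n
      have := congrFun (congrFun h n) n
      simpa [permChirpMatrix, Matrix.diagonal_apply_eq] using this
    · intro h
      unfold permChirpMatrix
      exact congrArg Matrix.diagonal (funext h)
  exact ⟨key.trans keyfun, key⟩
end

section
/- Let N, α, ℓmax, fmax : ℕ with fmax ≤ α and (2·α + 1)·(ℓmax + 1) ≤ N (the AFDM orthogonality condition with chirp parameter c₁ = (2α+1)/(2N), so that 2Nc₁ = 2α+1). Then the location-index map (ℓ, f) ↦ (f + ℓ·(2·α + 1)) mod N is injective on the set of integer pairs {0,…,ℓmax} × {−fmax,…,fmax}; i.e., distinct integer delay-Doppler pairs within the unambiguous range are mapped to distinct residues modulo N. -/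
/-- **Injectivity of the AFDM location-index map**: under the orthogonality condition
`(2α+1)·(ℓmax+1) ≤ N` with `fmax ≤ α`, the map `(ℓ, f) ↦ (f + ℓ·(2α+1)) mod N` is
injective on `{0,…,ℓmax} × {−fmax,…,fmax}`. -/
theorem afdm_location_index_injective (N α ℓmax fmax : ℕ)
    (hf : fmax ≤ α) (hN : (2 * α + 1) * (ℓmax + 1) ≤ N) :
    ∀ ℓ ℓ' f f' : ℤ,
      0 ≤ ℓ → ℓ ≤ ℓmax → 0 ≤ ℓ' → ℓ' ≤ ℓmax →
      -(fmax : ℤ) ≤ f → f ≤ fmax → -(fmax : ℤ) ≤ f' → f' ≤ fmax →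
      (f + ℓ * (2 * α + 1)) % (N : ℤ) = (f' + ℓ' * (2 * α + 1)) % (N : ℤ) →
      ℓ = ℓ' ∧ f = f' := by
  intro ℓ ℓ' f f' hℓ0 hℓ1 hℓ'0 hℓ'1 hf0 hf1 hf'0 hf'1 hmod
  have hd : (N : ℤ) ∣ (f' + ℓ' * (2 * α + 1)) - (f + ℓ * (2 * α + 1)) :=
    Int.ModEq.dvd hmod
  have hfα : (fmax : ℤ) ≤ α := by exact_mod_cast hf
  have hNZ : ((2 * α + 1) * (ℓmax + 1) : ℤ) ≤ N := by exact_mod_cast hN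
  have habs : |(f' + ℓ' * (2 * α + 1)) - (f + ℓ * (2 * α + 1))| < (N : ℤ) := by
    rw [abs_lt]
    constructor <;> nlinarith [hℓ1, hℓ'1, hf1, hf'1]
  have hz : (f' + ℓ' * (2 * α + 1)) - (f + ℓ * (2 * α + 1)) = 0 :=
    Int.eq_zero_of_abs_lt_dvd hd habs
  have hkey : f' - f = (ℓ - ℓ') * (2 * α + 1) := by ring_nf; linarith [hz]
  have hℓeq : ℓ = ℓ' := by
    rcases lt_trichotomy ℓ ℓ' with h | h | h
    · nlinarith
    · exact h
    · nlinarith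
  constructor
  · exact hℓeq
  · subst hℓeq; linarith [hkey]
end
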